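/- arXiv:2605.12209 — 3 statements merged into one kernel-verified Lean document; each statement's English description precedes it below -/
import Mathlib

section
/- The set {M ∈ Sym_d(F_q) : M V₁ = 0}, where V₁ ∈ F_q^{d×ℓ} consists of ℓ linearly independent columns, has cardinality q^{(d−ℓ)(d−ℓ+1)/2}. -/
open Matrix

lemma card_symm_matrices (k q : ℕ) (F : Type) [Field F] [Fintype F]
    (hF : Fintype.card F = q) :
    Nat.card {A : Matrix (Fin k) (Fin k) F // A.IsSymm} = q ^ (k * (k + 1) / 2) := by
  have e1 : {A : Matrix (Fin k) (Fin k) F // A.IsSymm} ≃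
      {f : Fin k → Fin k → F // ∀ a b, f a b = f b a} :=
    Equiv.subtypeEquivRight (fun A => by
      constructor
      · intro h a b
        have := congrFun (congrFun h b) a
        rwa [Matrix.transpose_apply] at this
      · intro h
        ext i j
        rw [Matrix.transpose_apply]
        exact h j i)
  have e2 := (Sym2.lift (α := Fin k) (β := F))
  rw [Nat.card_congr (e1.trans e2)]
  rw [Nat.card_eq_fintype_card, Fintype.card_fun, hF, Sym2.card, Fintype.card_fin]
  congr 1
  rw [Nat.choose_two_right]
  simp [Nat.mul_comm]

/-- If `V₁ ∈ F_q^{d × ℓ}` has `ℓ` linearly independent columns (here `d = ℓ + k`), then the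
set `{M ∈ Sym_d(F_q) : M V₁ = 0}` has cardinality `q ^ ((d-ℓ)(d-ℓ+1)/2) = q ^ (k(k+1)/2)`. -/
theorem card_symm_annihilator {ℓ k q : ℕ} (F : Type) [Field F] [Fintype F]
    (hF : Fintype.card F = q)
    (V₁ : Matrix (Fin (ℓ + k)) (Fin ℓ) F)
    (hli : LinearIndependent F fun j : Fin ℓ => fun i : Fin (ℓ + k) => V₁ i j) :
    Nat.card {M : Matrix (Fin (ℓ + k)) (Fin (ℓ + k)) F // M.IsSymm ∧ M * V₁ = 0}
      = q ^ (k * (k + 1) / 2) := by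
  classical
  set W : Submodule F (Fin (ℓ + k) → F) :=
    Submodule.span F (Set.range fun j : Fin ℓ => fun i : Fin (ℓ + k) => V₁ i j) with hW
  obtain ⟨W', hcompl⟩ := Submodule.exists_isCompl W
  have hdimW : Module.finrank F W = ℓ := by
    rw [hW, finrank_span_eq_card hli, Fintype.card_fin]
  have htot : Module.finrank F (Fin (ℓ + k) → F) = ℓ + k := by
    simp [Module.finrank_pi]
  have hdimW' : Module.finrank F W' = k := by
    have h := Submodule.finrank_add_eq_of_isCompl hcompl
    omega
  let bW : Module.Basis (Fin ℓ) F W := Module.Basis.span hli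
  let bW' : Module.Basis (Fin k) F W' := Module.finBasisOfFinrankEq F W' hdimW'
  let b : Module.Basis (Fin ℓ ⊕ Fin k) F (Fin (ℓ + k) → F) :=
    (bW.prod bW').map (Submodule.prodEquivOfIsCompl W W' hcompl)
  have hb : ∀ j : Fin ℓ, b (Sum.inl j) = fun i => V₁ i j := by
    intro j
    show (Submodule.prodEquivOfIsCompl W W' hcompl) ((bW.prod bW') (Sum.inl j)) = _
    rw [Submodule.coe_prodEquivOfIsCompl', Module.Basis.prod_apply_inl_fst, Module.Basis.prod_apply_inl_snd]
    rw [Submodule.coe_zero, add_zero]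
    exact congrArg Subtype.val (Module.Basis.span_apply hli j)
  let e : Fin ℓ ⊕ Fin k ≃ Fin (ℓ + k) := finSumFinEquiv
  let bPi : Module.Basis (Fin ℓ ⊕ Fin k) F (Fin (ℓ + k) → F) := (Pi.basisFun F (Fin (ℓ + k))).reindex e.symm
  let U : Matrix (Fin ℓ ⊕ Fin k) (Fin ℓ ⊕ Fin k) F := bPi.toMatrix b
  have hU : ∀ s t, U s t = b t (e s) := by
    intro s t
    simp [U, bPi, Module.Basis.toMatrix_apply, Module.Basis.repr_reindex, Pi.basisFun_repr]
  letI : Invertible U := bPi.invertibleToMatrix b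
  letI : Invertible Uᵀ := Matrix.invertibleTranspose U
  -- helper: right-multiplication submatrix
  have mul_sub : ∀ {γ : Type} (X Y : Matrix (Fin ℓ ⊕ Fin k) (Fin ℓ ⊕ Fin k) F) (f : γ → Fin ℓ ⊕ Fin k),
      X * Y.submatrix id f = (X * Y).submatrix id f := by
    intro γ X Y f
    ext i j
    simp [Matrix.mul_apply, Matrix.submatrix_apply]
  have hUV : U.submatrix id Sum.inl = V₁.submatrix e id := by
    ext s j
    rw [Matrix.submatrix_apply, Matrix.submatrix_apply, hU, hb]
    rfl
  have cancel1 : ∀ X : Matrix (Fin ℓ ⊕ Fin k) (Fin ℓ ⊕ Fin k) F,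
      ⅟Uᵀ * (Uᵀ * X * U) * ⅟U = X := by
    intro X
    rw [← Matrix.mul_assoc, ← Matrix.mul_assoc, invOf_mul_self, Matrix.one_mul,
      Matrix.mul_assoc, mul_invOf_self, Matrix.mul_one]
  have cancel2 : ∀ X : Matrix (Fin ℓ ⊕ Fin k) (Fin ℓ ⊕ Fin k) F,
      Uᵀ * (⅟Uᵀ * X * ⅟U) * U = X := by
    intro X
    rw [← Matrix.mul_assoc, ← Matrix.mul_assoc, mul_invOf_self, Matrix.one_mul,
      Matrix.mul_assoc, invOf_mul_self, Matrix.mul_one]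
  -- symmetry transfer
  have keyS : ∀ M : Matrix (Fin (ℓ + k)) (Fin (ℓ + k)) F,
      (M.IsSymm ↔ (Uᵀ * M.submatrix e e * U).IsSymm) := by
    intro M
    have htr : (Uᵀ * M.submatrix e e * U)ᵀ = Uᵀ * Mᵀ.submatrix e e * U := by
      rw [Matrix.transpose_mul, Matrix.transpose_mul, Matrix.transpose_transpose,
        Matrix.transpose_submatrix, Matrix.mul_assoc]
    constructor
    · intro h
      unfold Matrix.IsSymm
      rw [htr, h]
    · intro h
      unfold Matrix.IsSymm at h ⊢
      rw [htr] at h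
      have h2 := congrArg (fun Y => ⅟Uᵀ * Y * ⅟U) h
      rw [cancel1, cancel1] at h2
      ext i j
      have := congrFun (congrFun h2 (e.symm i)) (e.symm j)
      simpa [Matrix.submatrix_apply] using this
  -- annihilation transfer
  have key : ∀ M : Matrix (Fin (ℓ + k)) (Fin (ℓ + k)) F,
      (M * V₁ = 0 ↔ (Uᵀ * M.submatrix e e * U).submatrix id Sum.inl = 0) := by
    intro M
    have step1 : (Uᵀ * M.submatrix e e * U).submatrix id Sum.inl
        = Uᵀ * ((M * V₁).submatrix e id) := by
      rw [← mul_sub _ U Sum.inl, hUV, Matrix.mul_assoc]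
      congr 1
      exact Matrix.submatrix_mul_equiv M V₁ e e id
    rw [step1]
    constructor
    · intro h
      rw [h]
      ext s j
      simp [Matrix.mul_apply, Matrix.submatrix_apply]
    · intro h
      have h2 := congrArg (fun Y => ⅟Uᵀ * Y) h
      rw [← Matrix.mul_assoc, invOf_mul_self, Matrix.one_mul, Matrix.mul_zero] at h2
      ext i j
      have := congrFun (congrFun h2 (e.symm i)) j
      simpa [Matrix.submatrix_apply] using this
  -- submatrix inverses
  have subsub : ∀ X : Matrix (Fin ℓ ⊕ Fin k) (Fin ℓ ⊕ Fin k) F,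
      (X.submatrix e.symm e.symm).submatrix e e = X := by
    intro X
    simp [Matrix.submatrix_submatrix, Equiv.symm_comp_self]
  have subsub' : ∀ X : Matrix (Fin (ℓ + k)) (Fin (ℓ + k)) F,
      (X.submatrix e e).submatrix e.symm e.symm = X := by
    intro X
    simp [Matrix.submatrix_submatrix, Equiv.self_comp_symm]
  -- block structure of symmetric matrices with vanishing first columns
  have blockform : ∀ N : Matrix (Fin ℓ ⊕ Fin k) (Fin ℓ ⊕ Fin k) F, N.IsSymm →
      N.submatrix id Sum.inl = 0 → N = fromBlocks 0 0 0 N.toBlocks₂₂ := by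
    intro N hs h0
    have hcol : ∀ s j, N s (Sum.inl j) = 0 := fun s j => congrFun (congrFun h0 s) j
    have hrow : ∀ j t, N (Sum.inl j) t = 0 := by
      intro j t
      have h1 := congrFun (congrFun hs t) (Sum.inl j)
      rw [Matrix.transpose_apply] at h1
      rw [h1]
      exact hcol t j
    ext s t
    cases s with
    | inl j =>
      cases t with
      | inl j' => simp [hrow]
      | inr i' => simp [hrow]
    | inr i =>
      cases t with
      | inl j' => simp [hcol]
      | inr i' => simp [Matrix.toBlocks₂₂]
  have fbSymm : ∀ A : Matrix (Fin k) (Fin k) F, A.IsSymm →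
      (fromBlocks (0 : Matrix (Fin ℓ) (Fin ℓ) F) 0 0 A).IsSymm := by
    intro A hA
    unfold Matrix.IsSymm
    rw [Matrix.fromBlocks_transpose, Matrix.transpose_zero, Matrix.transpose_zero,
      Matrix.transpose_zero, hA]
  have fbCol : ∀ A : Matrix (Fin k) (Fin k) F,
      (fromBlocks (0 : Matrix (Fin ℓ) (Fin ℓ) F) 0 0 A).submatrix id Sum.inl = 0 := by
    intro A
    ext s j
    cases s <;> simp
  -- the bijection
  let Φ : {M : Matrix (Fin (ℓ + k)) (Fin (ℓ + k)) F // M.IsSymm ∧ M * V₁ = 0} ≃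
      {A : Matrix (Fin k) (Fin k) F // A.IsSymm} :=
    { toFun := fun M => ⟨(Uᵀ * M.1.submatrix e e * U).toBlocks₂₂, by
        have hs : (Uᵀ * M.1.submatrix e e * U).IsSymm := (keyS M.1).mp M.2.1
        ext i j
        rw [Matrix.transpose_apply]
        simp only [Matrix.toBlocks₂₂, Matrix.of_apply]
        have h1 := congrFun (congrFun hs (Sum.inr i)) (Sum.inr j)
        rwa [Matrix.transpose_apply] at h1⟩
      invFun := fun A => ⟨(⅟Uᵀ * fromBlocks 0 0 0 A.1 * ⅟U).submatrix e.symm e.symm, by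
        constructor
        · rw [keyS, subsub, cancel2]
          exact fbSymm A.1 A.2
        · rw [key, subsub, cancel2]
          exact fbCol A.1⟩
      left_inv := fun M => by
        apply Subtype.ext
        have hN := blockform _ ((keyS M.1).mp M.2.1) ((key M.1).mp M.2.2)
        show (⅟Uᵀ * fromBlocks 0 0 0 (Uᵀ * M.1.submatrix e e * U).toBlocks₂₂ * ⅟U).submatrix
            e.symm e.symm = M.1
        rw [← hN, cancel1, subsub']
      right_inv := fun A => by
        apply Subtype.ext
        show (Uᵀ * ((⅟Uᵀ * fromBlocks 0 0 0 A.1 * ⅟U).submatrix e.symm e.symm).submatrix e e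
            * U).toBlocks₂₂ = A.1
        rw [subsub, cancel2, Matrix.toBlocks_fromBlocks₂₂] }
  rw [Nat.card_congr Φ]
  exact card_symm_matrices k q F hF
end

section
/- (Converse for secure key-cast) Consider the network with source s, terminal t, and intermediate nodes v₁,...,v_d, where s is connected to each v_i by d parallel unit-capacity edges and each v_i is connected to t by a single unit-capacity edge. For any blocklength-n key-code producing a key K with H(K | X_t) = 0 and I(K; {X_v : v ∈ β}) = 0 for every set β of at most ℓ intermediate nodes, it holds that H(K) ≤ (d−ℓ) n log q, i.e., the secure key rate is at most d−ℓ. -/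
open Classical in
/-- Probability of an event `E` under a (real-valued) pmf `μ` on a finite sample space. -/
noncomputable def pr {Ω : Type*} [Fintype Ω] (μ : Ω → ℝ) (E : Set Ω) : ℝ :=
  ∑ ω : Ω, if ω ∈ E then μ ω else 0

/-- Shannon entropy (in nats) of the random variable `X` under the pmf `μ`. -/
noncomputable def ent {Ω α : Type*} [Fintype Ω] [Fintype α] (μ : Ω → ℝ) (X : Ω → α) : ℝ :=
  ∑ a : α, Real.negMulLog (pr μ {ω | X ω = a})

open Classical in
lemma pr_nonneg {Ω : Type*} [Fintype Ω] (μ : Ω → ℝ) (hμ0 : ∀ ω, 0 ≤ μ ω) (E : Set Ω) :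
    0 ≤ pr μ E := by
  refine Finset.sum_nonneg fun ω _ => ?_
  split
  · exact hμ0 ω
  · exact le_rfl

open Classical in
lemma single_le_pr {Ω : Type*} [Fintype Ω] (μ : Ω → ℝ) (hμ0 : ∀ ω, 0 ≤ μ ω) (E : Set Ω)
    {ω₀ : Ω} (h : ω₀ ∈ E) : μ ω₀ ≤ pr μ E := by
  have := Finset.single_le_sum (f := fun ω => if ω ∈ E then μ ω else 0)
    (fun ω _ => by split
                   · exact hμ0 ω
                   · exact le_rfl) (Finset.mem_univ ω₀)
  simpa [h, pr] using this

open Classical in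
lemma pr_witness {Ω : Type*} [Fintype Ω] (μ : Ω → ℝ) (E : Set Ω)
    (h : pr μ E ≠ 0) : ∃ ω, ω ∈ E ∧ μ ω ≠ 0 := by
  by_contra hc
  push_neg at hc
  apply h
  refine Finset.sum_eq_zero fun ω _ => ?_
  by_cases hω : ω ∈ E
  · simp [hω, hc ω hω]
  · simp [hω]

open Classical in
lemma sum_pr_fiber {Ω α : Type*} [Fintype Ω] [Fintype α] (μ : Ω → ℝ)
    (hμ1 : ∑ ω : Ω, μ ω = 1) (X : Ω → α) :
    ∑ a : α, pr μ {ω | X ω = a} = 1 := by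
  rw [← hμ1]
  unfold pr
  rw [Finset.sum_comm]
  refine Finset.sum_congr rfl fun ω _ => ?_
  simp [Set.mem_setOf_eq]

/-- Entropy of a pmf is at most the log of the size of its support. -/
lemma entropy_le_log_card {α : Type*} [Fintype α] (p : α → ℝ)
    (h0 : ∀ a, 0 ≤ p a) (h1 : ∑ a : α, p a = 1) (M : ℕ)
    (hM : (Finset.univ.filter (fun a => p a ≠ 0)).card ≤ M) :
    ∑ a : α, Real.negMulLog (p a) ≤ Real.log M := by
  classical
  set S := Finset.univ.filter (fun a => p a ≠ 0) with hS
  have hSsum : ∑ a ∈ S, p a = 1 := by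
    rw [hS, Finset.sum_filter_ne_zero, h1]
  have hSne : S.Nonempty := by
    rcases Finset.eq_empty_or_nonempty S with h | h
    · rw [h] at hSsum; simp at hSsum
    · exact h
  have hScard : 1 ≤ S.card := Finset.card_pos.mpr hSne
  have hMpos : (0 : ℝ) < M := by
    have : 1 ≤ M := le_trans hScard hM
    exact_mod_cast Nat.lt_of_lt_of_le Nat.zero_lt_one this
  have hsum_eq : ∑ a : α, Real.negMulLog (p a) = ∑ a ∈ S, Real.negMulLog (p a) := by
    refine (Finset.sum_subset (Finset.subset_univ S) fun a _ ha => ?_).symm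
    have : p a = 0 := by
      by_contra hpa
      exact ha (Finset.mem_filter.mpr ⟨Finset.mem_univ a, hpa⟩)
    simp [this]
  have key : ∀ a ∈ S, Real.negMulLog (p a) ≤ 1 / M - p a + p a * Real.log M := by
    intro a ha
    have hpa : 0 < p a :=
      lt_of_le_of_ne (h0 a) (Ne.symm (Finset.mem_filter.mp ha).2)
    have hlog : Real.log ((p a * M)⁻¹) ≤ (p a * M)⁻¹ - 1 :=
      Real.log_le_sub_one_of_pos (by positivity)
    have h2 := mul_le_mul_of_nonneg_left hlog hpa.le
    rw [Real.log_inv, Real.log_mul (ne_of_gt hpa) (ne_of_gt hMpos)] at h2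
    have hinv : p a * (p a * M)⁻¹ = 1 / M := by
      field_simp
    have : p a * ((p a * M)⁻¹ - 1) = 1 / M - p a := by
      rw [mul_sub, hinv, mul_one]
    rw [this] at h2
    simp only [Real.negMulLog, neg_mul]
    nlinarith [h2]
  calc ∑ a : α, Real.negMulLog (p a)
      = ∑ a ∈ S, Real.negMulLog (p a) := hsum_eq
    _ ≤ ∑ a ∈ S, (1 / M - p a + p a * Real.log M) := Finset.sum_le_sum key
    _ = S.card * (1 / M) - 1 + Real.log M := by
        rw [Finset.sum_add_distrib, Finset.sum_sub_distrib, ← Finset.sum_mul, hSsum,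
          Finset.sum_const, nsmul_eq_mul, one_mul]
    _ ≤ Real.log M := by
        have hc : (S.card : ℝ) ≤ (M : ℝ) := by exact_mod_cast hM
        have : (S.card : ℝ) * (1 / M) ≤ 1 := by
          rw [mul_one_div, div_le_one hMpos]; exact hc
        linarith

/-- Converse for secure key-cast on the network with source `s`, terminal `t`, and
intermediate nodes `v₁, …, v_d`, where `s` sends `Z i` (over `d` parallel unit-capacity
edges) to node `v i`, node `v i` sends the message `Y i` (a function of `Z i`) over its
unit-capacity edge to `t`, and `t` observes `X_t = (Y 1, …, Y d)`.  If the key `K` is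
decodable from `X_t` and is independent of the observation of every set `β` of at most
`ℓ ≤ d` intermediate nodes, then `H(K) ≤ (d - ℓ) n log q`. -/
theorem keycast_converse {d ℓ n q : ℕ} (hℓ : ℓ ≤ d) (hq : 0 < q)
    {Ω 𝒦 : Type} [Fintype Ω] [Fintype 𝒦]
    (μ : Ω → ℝ) (hμ0 : ∀ ω, 0 ≤ μ ω) (hμ1 : ∑ ω : Ω, μ ω = 1)
    (K : Ω → 𝒦)
    (Z : Fin d → Ω → (Fin d → Fin n → Fin q))
    (Y : Fin d → Ω → (Fin n → Fin q))
    (henc : ∀ i, ∃ φ : (Fin d → Fin n → Fin q) → (Fin n → Fin q),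
      ∀ ω, Y i ω = φ (Z i ω))
    (hdec : ∃ g : (Fin d → Fin n → Fin q) → 𝒦, ∀ ω, K ω = g (fun i => Y i ω))
    (hsec : ∀ β : Finset (Fin d), β.card ≤ ℓ →
      ∀ (kk : 𝒦) (zs : Fin d → Fin d → Fin n → Fin q),
        pr μ {ω | K ω = kk ∧ ∀ i ∈ β, Z i ω = zs i}
          = pr μ {ω | K ω = kk} * pr μ {ω | ∀ i ∈ β, Z i ω = zs i}) :
    ent μ K ≤ ((d - ℓ : ℕ) : ℝ) * n * Real.log q := by
  classical
  -- choose a set β of exactly ℓ intermediate nodes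
  obtain ⟨β, -, hβcard⟩ := Finset.exists_subset_card_eq (s := (Finset.univ : Finset (Fin d))) (n := ℓ)
    (by simpa using hℓ)
  obtain ⟨g, hg⟩ := hdec
  choose φ hφ using henc
  -- pick a sample point of positive probability
  have hω₀ : ∃ ω₀, μ ω₀ ≠ 0 := by
    by_contra hc
    push_neg at hc
    rw [Finset.sum_eq_zero (fun ω _ => hc ω)] at hμ1
    exact one_ne_zero hμ1.symm
  obtain ⟨ω₀, hω₀⟩ := hω₀
  set zs : Fin d → Fin d → Fin n → Fin q := fun i => Z i ω₀ with hzs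
  set E : Set Ω := {ω | ∀ i ∈ β, Z i ω = zs i} with hE
  have hω₀E : ω₀ ∈ E := fun i _ => rfl
  have hEpos : 0 < pr μ E :=
    lt_of_lt_of_le (lt_of_le_of_ne (hμ0 ω₀) (Ne.symm hω₀)) (single_le_pr μ hμ0 E hω₀E)
  -- the map reconstructing the key from the messages outside β
  set h : ({i : Fin d // i ∉ β} → Fin n → Fin q) → 𝒦 :=
    fun w => g (fun i => if hh : i ∈ β then φ i (zs i) else w ⟨i, hh⟩) with hh_def
  -- every key value with positive probability is in the range of h
  have hrange : ∀ k : 𝒦, pr μ {ω | K ω = k} ≠ 0 → ∃ w, h w = k := by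
    intro k hk
    have hind := hsec β (le_of_eq hβcard) k zs
    have hprodpos : pr μ {ω | K ω = k ∧ ∀ i ∈ β, Z i ω = zs i} ≠ 0 := by
      rw [hind]
      exact mul_ne_zero hk (ne_of_gt hEpos)
    obtain ⟨ω, hωmem, -⟩ := pr_witness μ _ hprodpos
    obtain ⟨hωK, hωZ⟩ := hωmem
    refine ⟨fun j => Y j.1 ω, ?_⟩
    rw [hh_def]
    have : (fun i => if hh : i ∈ β then φ i (zs i) else Y i ω) = (fun i => Y i ω) := by
      funext i
      by_cases hiβ : i ∈ β
      · simp only [hiβ, dif_pos]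
        rw [← hωZ i hiβ, ← hφ i ω]
      · simp [hiβ]
    simp only [this]
    exact (hg ω ▸ hωK)
  -- bound the size of the support of K
  set S : Finset 𝒦 := Finset.univ.filter (fun k => pr μ {ω | K ω = k} ≠ 0) with hSdef
  have hScard : S.card ≤ (q ^ n) ^ (d - ℓ) := by
    have hsub : S ⊆ Finset.univ.image h := by
      intro k hk
      obtain ⟨w, hw⟩ := hrange k (Finset.mem_filter.mp hk).2
      exact Finset.mem_image.mpr ⟨w, Finset.mem_univ w, hw⟩
    calc S.card ≤ (Finset.univ.image h).card := Finset.card_le_card hsub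
      _ ≤ Fintype.card ({i : Fin d // i ∉ β} → Fin n → Fin q) := by
          exact Finset.card_image_le.trans_eq Finset.card_univ
      _ = (q ^ n) ^ (d - ℓ) := by
          have hcardsub : Fintype.card {i : Fin d // i ∉ β} = d - ℓ := by
            rw [Fintype.card_subtype_compl]
            simp [hβcard, Fintype.card_subtype, Finset.filter_mem_eq_inter]
          rw [Fintype.card_fun, Fintype.card_fun, hcardsub, Fintype.card_fin,
            Fintype.card_fin]
  -- apply the entropy bound
  have := entropy_le_log_card (fun k => pr μ {ω | K ω = k})
    (fun k => pr_nonneg μ hμ0 _) (sum_pr_fiber μ hμ1 K) ((q ^ n) ^ (d - ℓ)) hScard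
  refine le_trans this (le_of_eq ?_)
  push_cast
  rw [Real.log_pow, Real.log_pow]
  push_cast
  ring
end

section
/- Suppose a node v is d-vertex connected from the source s (there exist d internally vertex-disjoint unit-capacity paths from s to v), and an eavesdropper may observe any set of at most ℓ < d intermediate nodes (excluding s and v). Then s can transmit a message x ∈ F_q^{d−ℓ} to v such that v recovers x exactly and the eavesdropper's observation is statistically independent of x, by sending Shamir share f(i) along the i-th path. -/
/-- Secure transmission over `d = k + ℓ` vertex-disjoint paths: if a node `v` is
`d`-vertex connected from the source `s` and an eavesdropper may observe any `ℓ < d`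
intermediate nodes (equivalently, any `ℓ` of the `d` disjoint paths, hence any `ℓ` of the
`d` shares), then `s` can transmit `x ∈ F_q^{d-ℓ}` so that `v` recovers `x` exactly while
the eavesdropper's observation is statistically independent of `x`: there is an encoding
of `(x, r)` into `d` shares (one per path) together with a decoder, such that for every
injective choice `O` of `ℓ` observed paths and every secret `x`, the map from the uniform
pad `r` to the observed shares is a bijection (so the observation is uniform,
independently of `x`). -/
theorem secure_transmission_d_connected {k ℓ : ℕ} (F : Type) [Field F] [Fintype F]
    (hq : k + ℓ < Fintype.card F) :
    ∃ (enc : (Fin k → F) → (Fin ℓ → F) → (Fin (k + ℓ) → F))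
      (dec : (Fin (k + ℓ) → F) → (Fin k → F)),
      (∀ x r, dec (enc x r) = x) ∧
      (∀ O : Fin ℓ → Fin (k + ℓ), Function.Injective O → ∀ x : Fin k → F,
        Function.Bijective (fun r : Fin ℓ → F => fun t : Fin ℓ => enc x r (O t))) := by
  classical
  -- choose an embedding of `Fin (k+ℓ+1)` into `F`
  obtain ⟨e⟩ : Nonempty (Fin (k + ℓ + 1) ↪ F) :=
    Function.Embedding.nonempty_of_card_le (by simpa using hq)
  -- nonzero, pairwise distinct evaluation points
  set pt : Fin (k + ℓ) → F := fun i => e i.succ - e 0 with hpt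
  have hpt_inj : Function.Injective pt := by
    intro i j h
    have : e i.succ = e j.succ := sub_left_injective h
    exact Fin.succ_injective _ (e.injective this)
  have hpt_ne : ∀ i, pt i ≠ 0 := by
    intro i h
    have : e i.succ = e 0 := by rwa [hpt, sub_eq_zero] at h
    exact (Fin.succ_ne_zero i) (e.injective this)
  set V : Matrix (Fin (k + ℓ)) (Fin (k + ℓ)) F := Matrix.vandermonde pt with hV
  have hVdet : IsUnit V.det := by
    refine (Matrix.det_vandermonde_ne_zero_iff.mpr hpt_inj).isUnit
  -- encoding and decoding
  refine ⟨fun x r i => ∑ j, Fin.append x r j * pt i ^ (j : ℕ),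
      fun v j => (V⁻¹.mulVec v) (Fin.castAdd ℓ j), ?_, ?_⟩
  · intro x r
    have henc : (fun i => ∑ j, Fin.append x r j * pt i ^ (j : ℕ)) =
        V.mulVec (Fin.append x r) := by
      funext i
      simp [Matrix.mulVec, dotProduct, hV, Matrix.vandermonde, mul_comm]
    funext j
    simp only [henc, Matrix.mulVec_mulVec, Matrix.nonsing_inv_mul _ hVdet,
      Matrix.one_mulVec]
    exact Fin.append_left x r j
  · intro O hO x
    set M : Matrix (Fin ℓ) (Fin ℓ) F :=
      Matrix.of fun t s => pt (O t) ^ k * pt (O t) ^ (s : ℕ) with hM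
    have hMdet : IsUnit M.det := by
      rw [hM]
      have : M.det = (∏ t, pt (O t) ^ k) * (Matrix.vandermonde (pt ∘ O)).det := by
        exact Matrix.det_mul_column (fun t => pt (O t) ^ k) (Matrix.vandermonde (pt ∘ O))
      rw [hM] at this
      rw [this]
      exact ((Finset.prod_ne_zero_iff.mpr fun t _ => pow_ne_zero _ (hpt_ne _)).isUnit.mul
        (Matrix.det_vandermonde_ne_zero_iff.mpr (hpt_inj.comp hO)).isUnit)
    set b : Fin ℓ → F := fun t => ∑ j : Fin k, x j * pt (O t) ^ (j : ℕ) with hb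
    have hsplit : ∀ r t, (∑ j, Fin.append x r j * pt (O t) ^ (j : ℕ)) =
        b t + M.mulVec r t := by
      intro r t
      rw [Fin.sum_univ_add (f := fun j : Fin (k + ℓ) => Fin.append x r j * pt (O t) ^ (j : ℕ))]
      congr 1
      · simp [hb, Fin.append_left]
      · simp only [Fin.append_right, Matrix.mulVec, dotProduct, hM, Matrix.of_apply]
        refine Finset.sum_congr rfl fun s _ => ?_
        rw [Fin.coe_natAdd, pow_add]
        ring
    have hinj : Function.Injective
        (fun r : Fin ℓ → F => fun t : Fin ℓ => ∑ j, Fin.append x r j * pt (O t) ^ (j : ℕ)) := by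
      intro r r' h
      have hM' : M.mulVec r = M.mulVec r' := by
        funext t
        have h1 := congrFun h t
        simp only [hsplit] at h1
        exact add_left_cancel h1
      have := congrArg (M⁻¹.mulVec) hM'
      simpa [Matrix.mulVec_mulVec, Matrix.nonsing_inv_mul _ hMdet, Matrix.one_mulVec]
        using this
    exact Finite.injective_iff_bijective.mp hinj
end
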